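/- (Corrected formula.) For any real m×r matrix C and any real r×n matrix R (with no rank assumptions), the Moore–Penrose pseudoinverse of the product A = CR satisfies (CR)⁺ = (C⁺CR)⁺ (CRR⁺)⁺. -/
import Mathlib


open Matrix

/-- `G` satisfies the four Penrose equations for `A`, i.e. `G` is the Moore–Penrose
pseudoinverse of `A`. -/
def IsMoorePenrose {m n : ℕ} (A : Matrix (Fin m) (Fin n) ℝ)
    (G : Matrix (Fin n) (Fin m) ℝ) : Prop :=
  A * G * A = A ∧ G * A * G = G ∧ (A * G)ᵀ = A * G ∧ (G * A)ᵀ = G * A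

/-- Uniqueness of the Moore–Penrose pseudoinverse. -/
lemma mp_unique {m n : ℕ} {A : Matrix (Fin m) (Fin n) ℝ}
    {G H : Matrix (Fin n) (Fin m) ℝ}
    (hG : IsMoorePenrose A G) (hH : IsMoorePenrose A H) : G = H := by
  obtain ⟨hG1, hG2, hG3, hG4⟩ := hG
  obtain ⟨hH1, hH2, hH3, hH4⟩ := hH
  have hAG : A * G = A * H := by
    calc A * G = (A * G)ᵀ := hG3.symm
    _ = Gᵀ * Aᵀ := by rw [transpose_mul]
    _ = Gᵀ * (A * H * A)ᵀ := by rw [hH1]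
    _ = Gᵀ * (Aᵀ * (A * H)ᵀ) := by simp only [Matrix.transpose_mul, Matrix.mul_assoc]
    _ = Gᵀ * (Aᵀ * (A * H)) := by rw [hH3]
    _ = (Gᵀ * Aᵀ) * (A * H) := by simp only [Matrix.mul_assoc]
    _ = (A * G)ᵀ * (A * H) := by rw [Matrix.transpose_mul A G]
    _ = (A * G) * (A * H) := by rw [hG3]
    _ = (A * G * A) * H := by simp only [Matrix.mul_assoc]
    _ = A * H := by rw [hG1]
  have hGA : G * A = H * A := by
    calc G * A = (G * A)ᵀ := hG4.symm
    _ = Aᵀ * Gᵀ := by rw [transpose_mul]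
    _ = (A * H * A)ᵀ * Gᵀ := by rw [hH1]
    _ = ((H * A)ᵀ * Aᵀ) * Gᵀ := by simp only [Matrix.transpose_mul, Matrix.mul_assoc]
    _ = ((H * A) * Aᵀ) * Gᵀ := by rw [hH4]
    _ = H * (A * (Aᵀ * Gᵀ)) := by simp only [Matrix.mul_assoc]
    _ = H * (A * (G * A)ᵀ) := by rw [Matrix.transpose_mul G A]
    _ = H * (A * (G * A)) := by rw [hG4]
    _ = H * (A * G * A) := by simp only [Matrix.mul_assoc]
    _ = H * A := by rw [hG1]
  calc G = G * A * G := hG2.symm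
  _ = (H * A) * G := by rw [hGA]
  _ = H * (A * G) := by simp only [Matrix.mul_assoc]
  _ = H * (A * H) := by rw [hAG]
  _ = H * A * H := by simp only [Matrix.mul_assoc]
  _ = H := hH2

/-- Corrected formula: for any `C` and `R` (no rank assumptions),
`(C * R)⁺ = (C⁺ * C * R)⁺ * (C * R * R⁺)⁺`. -/
theorem corrected_formula (m r n : ℕ)
    (C : Matrix (Fin m) (Fin r) ℝ) (R : Matrix (Fin r) (Fin n) ℝ)
    (Ap : Matrix (Fin n) (Fin m) ℝ)
    (Cp : Matrix (Fin r) (Fin m) ℝ) (Rp : Matrix (Fin n) (Fin r) ℝ)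
    (X : Matrix (Fin n) (Fin r) ℝ) (Y : Matrix (Fin r) (Fin m) ℝ)
    (hAp : IsMoorePenrose (C * R) Ap)
    (hCp : IsMoorePenrose C Cp) (hRp : IsMoorePenrose R Rp)
    (hX : IsMoorePenrose (Cp * C * R) X)
    (hY : IsMoorePenrose (C * R * Rp) Y) :
    Ap = X * Y := by
  obtain ⟨hCp1, hCp2, hCp3, hCp4⟩ := hCp
  obtain ⟨hRp1, hRp2, hRp3, hRp4⟩ := hRp
  obtain ⟨hX1, hX2, hX3, hX4⟩ := hX
  obtain ⟨hY1, hY2, hY3, hY4⟩ := hY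
  -- projector idempotency facts
  have Pidem : (Cp * C) * (Cp * C) = Cp * C := by
    calc (Cp * C) * (Cp * C) = (Cp * C * Cp) * C := by simp only [Matrix.mul_assoc]
    _ = Cp * C := by rw [hCp2]
  have Qidem : (R * Rp) * (R * Rp) = R * Rp := by
    calc (R * Rp) * (R * Rp) = (R * Rp * R) * Rp := by simp only [Matrix.mul_assoc]
    _ = R * Rp := by rw [hRp1]
  have hCB : C * (Cp * C * R) = C * R := by
    calc C * (Cp * C * R) = (C * Cp * C) * R := by simp only [Matrix.mul_assoc]
    _ = C * R := by rw [hCp1]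
  -- L1 : X * (Cp * C) = X
  have key : X = X * (Xᵀ * (Rᵀ * (Cp * C))) := by
    calc X = X * ((Cp * C * R) * X) := by rw [← Matrix.mul_assoc, hX2]
    _ = X * ((Cp * C * R) * X)ᵀ := by rw [hX3]
    _ = X * (Xᵀ * (Cp * C * R)ᵀ) := by rw [Matrix.transpose_mul (Cp * C * R) X]
    _ = X * (Xᵀ * (Rᵀ * (Cp * C)ᵀ)) := by rw [Matrix.transpose_mul (Cp * C) R]
    _ = X * (Xᵀ * (Rᵀ * (Cp * C))) := by rw [hCp4]
  have L1 : X * (Cp * C) = X := by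
    calc X * (Cp * C) = (X * (Xᵀ * (Rᵀ * (Cp * C)))) * (Cp * C) := by rw [← key]
    _ = X * (Xᵀ * (Rᵀ * ((Cp * C) * (Cp * C)))) := by simp only [Matrix.mul_assoc]
    _ = X * (Xᵀ * (Rᵀ * (Cp * C))) := by rw [Pidem]
    _ = X := key.symm
  -- L2 : (R * Rp) * Y = Y
  have key2 : Y = (R * Rp) * (Cᵀ * (Yᵀ * Y)) := by
    calc Y = (Y * (C * R * Rp)) * Y := hY2.symm
    _ = (Y * (C * R * Rp))ᵀ * Y := by rw [hY4]
    _ = ((C * R * Rp)ᵀ * Yᵀ) * Y := by rw [Matrix.transpose_mul Y (C * R * Rp)]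
    _ = ((Rpᵀ * (Rᵀ * Cᵀ)) * Yᵀ) * Y := by
          simp only [Matrix.transpose_mul, Matrix.mul_assoc]
    _ = (Rpᵀ * Rᵀ) * (Cᵀ * (Yᵀ * Y)) := by simp only [Matrix.mul_assoc]
    _ = (R * Rp)ᵀ * (Cᵀ * (Yᵀ * Y)) := by rw [Matrix.transpose_mul R Rp]
    _ = (R * Rp) * (Cᵀ * (Yᵀ * Y)) := by rw [hRp3]
  have L2 : (R * Rp) * Y = Y := by
    calc (R * Rp) * Y = (R * Rp) * ((R * Rp) * (Cᵀ * (Yᵀ * Y))) := by rw [← key2]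
    _ = ((R * Rp) * (R * Rp)) * (Cᵀ * (Yᵀ * Y)) := by simp only [Matrix.mul_assoc]
    _ = (R * Rp) * (Cᵀ * (Yᵀ * Y)) := by rw [Qidem]
    _ = Y := key2.symm
  -- eq4 : (X*Y)*(C*R) = X*(Cp*C*R)
  have eq4fact : X * Y * (C * R) = X * (Cp * C * R) := by
    calc X * Y * (C * R) = (X * (Cp * C)) * Y * (C * R) := by rw [L1]
    _ = (X * (Cp * C)) * ((R * Rp) * Y) * (C * R) := by rw [L2]
    _ = (X * (Cp * C)) * ((R * Rp) * Y) * (C * (R * Rp * R)) := by rw [hRp1]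
    _ = X * Cp * ((C * R * Rp) * Y * (C * R * Rp) * R) := by
          simp only [Matrix.mul_assoc]
    _ = X * Cp * ((C * R * Rp) * R) := by rw [hY1]
    _ = X * Cp * (C * (R * Rp * R)) := by simp only [Matrix.mul_assoc]
    _ = X * Cp * (C * R) := by rw [hRp1]
    _ = X * (Cp * C * R) := by simp only [Matrix.mul_assoc]
  -- eq3 : (C*R)*(X*Y) = (C*R*Rp)*Y
  have eq3fact : (C * R) * (X * Y) = (C * R * Rp) * Y := by
    calc (C * R) * (X * Y) = (C * (Cp * C * R)) * (X * Y) := by rw [hCB]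
    _ = (C * (Cp * C * R)) * ((X * (Cp * C)) * Y) := by rw [L1]
    _ = (C * (Cp * C * R)) * ((X * (Cp * C)) * ((R * Rp) * Y)) := by rw [L2]
    _ = C * ((Cp * C * R) * X * (Cp * C * R) * (Rp * Y)) := by
          simp only [Matrix.mul_assoc]
    _ = C * ((Cp * C * R) * (Rp * Y)) := by rw [hX1]
    _ = (C * (Cp * C * R)) * (Rp * Y) := by simp only [Matrix.mul_assoc]
    _ = (C * R) * (Rp * Y) := by rw [hCB]
    _ = (C * R * Rp) * Y := by simp only [Matrix.mul_assoc]
  have hXY : IsMoorePenrose (C * R) (X * Y) := by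
    refine ⟨?_, ?_, ?_, ?_⟩
    · calc (C * R) * (X * Y) * (C * R) = ((C * R * Rp) * Y) * (C * R) := by
            rw [eq3fact]
      _ = ((C * R * Rp) * Y) * (C * (R * Rp * R)) := by rw [hRp1]
      _ = (C * R * Rp) * Y * (C * R * Rp) * R := by simp only [Matrix.mul_assoc]
      _ = (C * R * Rp) * R := by rw [hY1]
      _ = C * (R * Rp * R) := by simp only [Matrix.mul_assoc]
      _ = C * R := by rw [hRp1]
    · calc (X * Y) * (C * R) * (X * Y) = (X * (Cp * C * R)) * (X * Y) := by
            rw [eq4fact]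
      _ = (X * (Cp * C * R) * X) * Y := by simp only [Matrix.mul_assoc]
      _ = X * Y := by rw [hX2]
    · rw [eq3fact]; exact hY3
    · rw [eq4fact]; exact hX4
  exact mp_unique hAp hXY
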